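/- Let P̃ = (X+Y+Z)(X+Z)(Y+Z) ∈ ℤ[X,Y,Z]. For every n ≥ 1, the coefficient c_n of the monomial X^n Y^n Z^n in P̃^n equals the Apéry number Σ_{k=0}^{n} C(n,k)^2 · C(n+k,k). -/

import Mathlib

open MvPolynomial

/-- The exponent vector of the monomial `X^n Y^n Z^n` in three variables. -/
noncomputable def diagExp (n : ℕ) : Fin 3 →₀ ℕ :=
  Finsupp.single 0 n + Finsupp.single 1 n + Finsupp.single 2 n

open Finset in
lemma apery_exp2 (i j : Fin 3) (n : ℕ) :
    ((X i + X j : MvPolynomial (Fin 3) ℤ)) ^ n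
      = ∑ a ∈ range (n+1), monomial (Finsupp.single i a + Finsupp.single j (n-a))
          ((n.choose a : ℤ)) := by
  rw [add_pow]
  refine Finset.sum_congr rfl fun a _ => ?_
  rw [X_pow_eq_monomial, X_pow_eq_monomial, monomial_mul, mul_one]
  rw [show ((n.choose a : ℕ) : MvPolynomial (Fin 3) ℤ) = C ((n.choose a : ℤ)) by norm_cast]
  rw [mul_comm, C_mul_monomial, mul_one]

open Finset in
lemma apery_exp3 (n : ℕ) :
    ((X 0 + X 1 + X 2 : MvPolynomial (Fin 3) ℤ)) ^ n
      = ∑ k ∈ range (n+1), ∑ i ∈ range (k+1),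
          monomial (Finsupp.single 0 i + Finsupp.single 1 (k-i) + Finsupp.single 2 (n-k))
            ((n.choose k * k.choose i : ℕ) : ℤ) := by
  rw [add_pow]
  refine Finset.sum_congr rfl fun k hk => ?_
  rw [apery_exp2 0 1 k, Finset.sum_mul, Finset.sum_mul]
  refine Finset.sum_congr rfl fun i hi => ?_
  rw [X_pow_eq_monomial, monomial_mul, mul_one]
  rw [show ((n.choose k : ℕ) : MvPolynomial (Fin 3) ℤ) = C ((n.choose k : ℤ)) by norm_cast]
  rw [mul_comm _ (C ((n.choose k : ℤ))), C_mul_monomial]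
  push_cast
  ring_nf

lemma apery_finsupp_eq_iff (n k i a b : ℕ) (hk : k ≤ n) (hi : i ≤ k) (ha : a ≤ n) (hb : b ≤ n) :
    ((Finsupp.single 0 i + Finsupp.single 1 (k-i) + Finsupp.single 2 (n-k))
      + (Finsupp.single 0 a + Finsupp.single 2 (n-a))
      + (Finsupp.single 1 b + Finsupp.single 2 (n-b)) : Fin 3 →₀ ℕ) = diagExp n
    ↔ (a = n - i ∧ b = n - (k - i)) := by
  constructor
  · intro h
    have h0 := DFunLike.congr_fun h 0
    have h1 := DFunLike.congr_fun h 1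
    simp [diagExp, Finsupp.single_apply] at h0 h1
    omega
  · rintro ⟨rfl, rfl⟩
    ext x
    fin_cases x <;> simp [diagExp, Finsupp.single_apply] <;> omega

open Finset in
lemma apery_swapper {M : Type*} [AddCommMonoid M] (n : ℕ) (g : ℕ → ℕ → ℕ → ℕ → M) :
    (∑ b ∈ range (n+1), ∑ a ∈ range (n+1), ∑ k ∈ range (n+1), ∑ i ∈ range (k+1), g b a k i)
    = ∑ k ∈ range (n+1), ∑ i ∈ range (k+1), ∑ b ∈ range (n+1), ∑ a ∈ range (n+1), g b a k i := by
  refine (Finset.sum_congr rfl fun b _ => Finset.sum_comm).trans ?_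
  refine (Finset.sum_comm).trans ?_
  refine Finset.sum_congr rfl fun k _ => ?_
  refine (Finset.sum_congr rfl fun b _ => Finset.sum_comm).trans ?_
  exact Finset.sum_comm

open Finset in
lemma apery_prod_expand (n : ℕ) :
    (((X 0 + X 1 + X 2) * (X 0 + X 2) * (X 1 + X 2) : MvPolynomial (Fin 3) ℤ) ^ n)
    = ∑ b ∈ range (n+1), ∑ a ∈ range (n+1), ∑ k ∈ range (n+1), ∑ i ∈ range (k+1),
        monomial ((Finsupp.single 0 i + Finsupp.single 1 (k-i) + Finsupp.single 2 (n-k))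
          + (Finsupp.single 0 a + Finsupp.single 2 (n-a))
          + (Finsupp.single 1 b + Finsupp.single 2 (n-b)))
          ((n.choose k * k.choose i * n.choose a * n.choose b : ℕ) : ℤ) := by
  rw [mul_pow, mul_pow, apery_exp3, apery_exp2 0 2 n, apery_exp2 1 2 n]
  simp only [Finset.sum_mul, Finset.mul_sum, monomial_mul]
  refine Finset.sum_congr rfl fun b _ => Finset.sum_congr rfl fun a _ =>
    Finset.sum_congr rfl fun k _ => Finset.sum_congr rfl fun i _ => ?_
  congr 1

open Finset in
lemma apery_key (n : ℕ) :
    MvPolynomial.coeff (diagExp n)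
      (((X 0 + X 1 + X 2) * (X 0 + X 2) * (X 1 + X 2) : MvPolynomial (Fin 3) ℤ) ^ n)
    = ∑ k ∈ range (n+1), ∑ i ∈ range (k+1),
        ((n.choose k * k.choose i * n.choose (n-i) * n.choose (n-(k-i)) : ℕ) : ℤ) := by
  rw [apery_prod_expand]
  simp only [coeff_sum, coeff_monomial]
  rw [apery_swapper]
  refine Finset.sum_congr rfl fun k hk => Finset.sum_congr rfl fun i hi => ?_
  simp only [Finset.mem_range, Nat.lt_succ_iff] at hk hi
  rw [Finset.sum_eq_single (n - (k - i))]
  · rw [Finset.sum_eq_single (n - i)]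
    · rw [if_pos]
      exact (apery_finsupp_eq_iff n k i (n-i) (n-(k-i)) hk hi (by omega) (by omega)).mpr ⟨rfl, rfl⟩
    · intro a ha hane
      rw [if_neg]
      intro h
      exact hane ((apery_finsupp_eq_iff n k i a (n-(k-i)) hk hi
        (by simp only [Finset.mem_range, Nat.lt_succ_iff] at ha; omega) (by omega)).mp h).1
    · intro h
      exact absurd (Finset.mem_range.mpr (by omega)) h
  · intro b hb hbne
    refine Finset.sum_eq_zero fun a ha => ?_
    rw [if_neg]
    intro h
    exact hbne ((apery_finsupp_eq_iff n k i a b hk hi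
      (by simp only [Finset.mem_range, Nat.lt_succ_iff] at ha; omega)
      (by simp only [Finset.mem_range, Nat.lt_succ_iff] at hb; omega)).mp h).2
  · intro h
    exact absurd (Finset.mem_range.mpr (by omega)) h

open Finset in
lemma apery_vdm (m n : ℕ) : ∑ t ∈ range (m+1), n.choose t * m.choose t = (n+m).choose m := by
  rw [Nat.add_choose_eq, Finset.Nat.sum_antidiagonal_eq_sum_range_succ_mk]
  refine Finset.sum_congr rfl fun t ht => ?_
  rw [Nat.choose_symm (by simpa [Nat.lt_succ_iff] using ht)]

open Finset in
lemma apery_count (n : ℕ) :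
    (∑ k ∈ range (n+1), ∑ i ∈ range (k+1),
      n.choose k * k.choose i * n.choose (n-i) * n.choose (n-(k-i)))
    = ∑ k ∈ range (n+1), n.choose k ^ 2 * (n+k).choose k := by
  have h1 : (∑ k ∈ range (n+1), ∑ i ∈ range (k+1),
      n.choose k * k.choose i * n.choose (n-i) * n.choose (n-(k-i)))
      = ∑ k ∈ range (n+1), ∑ i ∈ range (n+1),
      n.choose k * k.choose i * n.choose (n-i) * n.choose (n-(k-i)) := by
    refine Finset.sum_congr rfl fun k hk => ?_
    refine Finset.sum_subset (Finset.range_subset_range.mpr (by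
      simp only [Finset.mem_range, Nat.lt_succ_iff] at hk; omega)) fun i _ hi => ?_
    simp only [Finset.mem_range, Nat.lt_succ_iff, not_le] at hi
    rw [Nat.choose_eq_zero_of_lt hi]
    ring
  rw [h1, Finset.sum_comm]
  have h2 : ∀ i ∈ range (n+1), (∑ k ∈ range (n+1),
      n.choose k * k.choose i * n.choose (n-i) * n.choose (n-(k-i)))
      = n.choose i ^ 2 * (n + (n-i)).choose (n-i) := by
    intro i hi
    simp only [Finset.mem_range, Nat.lt_succ_iff] at hi
    rw [Finset.range_eq_Ico, ← Finset.sum_Ico_consecutive _ (Nat.zero_le i) (by omega : i ≤ n+1)]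
    have hz : (∑ k ∈ Finset.Ico 0 i,
        n.choose k * k.choose i * n.choose (n-i) * n.choose (n-(k-i))) = 0 := by
      refine Finset.sum_eq_zero fun k hk => ?_
      simp only [Finset.mem_Ico] at hk
      rw [Nat.choose_eq_zero_of_lt hk.2]
      ring
    rw [hz, zero_add, Finset.sum_Ico_eq_sum_range]
    have hr : n + 1 - i = (n - i) + 1 := by omega
    rw [hr]
    have h3 : ∀ t ∈ range ((n-i)+1),
        n.choose (i+t) * (i+t).choose i * n.choose (n-i) * n.choose (n-(i+t-i))
        = n.choose i ^ 2 * (n.choose t * (n-i).choose t) := by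
      intro t ht
      simp only [Finset.mem_range, Nat.lt_succ_iff] at ht
      have hit : i + t ≤ n := by omega
      rw [show i + t - i = t by omega]
      rw [Nat.choose_mul (Nat.le_add_right i t)]
      rw [show i + t - i = t by omega]
      rw [Nat.choose_symm hi, Nat.choose_symm (by omega : t ≤ n)]
      ring
    rw [Finset.sum_congr rfl h3, ← Finset.mul_sum, apery_vdm (n-i) n]
  rw [Finset.sum_congr rfl h2]
  rw [← Finset.sum_range_reflect (fun k => n.choose k ^ 2 * (n+k).choose k) (n+1)]
  refine Finset.sum_congr rfl fun i hi => ?_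
  simp only [Finset.mem_range, Nat.lt_succ_iff] at hi
  rw [show n + 1 - 1 - i = n - i by omega, Nat.choose_symm hi]

/-- For `P̃ = (X+Y+Z)(X+Z)(Y+Z)`, the coefficient `c_n` of `XⁿYⁿZⁿ` in `P̃ⁿ`
equals the Apéry number `Σ_{k=0}^n C(n,k)² C(n+k,k)`. -/
theorem stmt7 (n : ℕ) (hn : 1 ≤ n) :
    MvPolynomial.coeff (diagExp n)
      (((X 0 + X 1 + X 2) * (X 0 + X 2) * (X 1 + X 2) : MvPolynomial (Fin 3) ℤ) ^ n)
      = ∑ k ∈ Finset.range (n + 1), (Nat.choose n k ^ 2 * Nat.choose (n + k) k : ℕ) := by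
  rw [apery_key n]
  exact_mod_cast apery_count n
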